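/- For any natural number x and any k, popcount(x) = popcount(x AND m) + popcount((x / 2^(2^k)) AND m'), where m is the mask with the low 2^k bits of each 2^(k+1)-bit block set and m' is the same mask; i.e., splitting x into the even and odd 2^k-bit sub-blocks partitions its set bits. -/

import Mathlib

set_option linter.unnecessarySeqFocus false in
lemma pc_step (n : ℕ) : n.bits.count true = n % 2 + (n / 2).bits.count true := by
  rcases Nat.eq_zero_or_pos n with h | h
  · simp [h]
  · have hd : (Nat.bit n.bodd n.div2) = n := Nat.bit_bodd_div2 n
    have hside : n.div2 = 0 → n.bodd = true := by
      intro h0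
      by_contra hb
      simp only [Bool.not_eq_true] at hb
      rw [← hd, h0, hb] at h
      simp [Nat.bit] at h
    conv_lhs => rw [← hd]
    rw [Nat.bits_append_bit _ _ hside, Nat.div2_val, Nat.mod_two_of_bodd]
    cases n.bodd <;> simp [List.count_cons] <;> try omega

lemma pc_add {a : ℕ} (b : ℕ) {n : ℕ} (ha : a < 2 ^ n) :
    (2 ^ n * b + a).bits.count true = a.bits.count true + b.bits.count true := by
  induction n generalizing a with
  | zero => interval_cases a; simp
  | succ n ih =>
    rw [pc_step (2 ^ (n + 1) * b + a), pc_step a]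
    have he : 2 ^ (n + 1) * b = 2 * (2 ^ n * b) := by ring
    have h1 : (2 ^ (n + 1) * b + a) % 2 = a % 2 := by omega
    have h2 : (2 ^ (n + 1) * b + a) / 2 = 2 ^ n * b + a / 2 := by omega
    have ha2 : a / 2 < 2 ^ n := by
      have : (2:ℕ) ^ (n+1) = 2 * 2 ^ n := by ring
      omega
    rw [h1, h2, ih ha2]
    ring

lemma land_split {a c : ℕ} (b d : ℕ) {n : ℕ} (ha : a < 2 ^ n) (hc : c < 2 ^ n) :
    (2 ^ n * b + a) &&& (2 ^ n * d + c) = 2 ^ n * (b &&& d) + (a &&& c) := by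
  apply Nat.eq_of_testBit_eq
  intro i
  have hac : a &&& c < 2 ^ n := lt_of_le_of_lt (Nat.and_le_left) ha
  rw [Nat.testBit_two_pow_mul_add _ hac, Nat.testBit_and,
    Nat.testBit_two_pow_mul_add _ ha, Nat.testBit_two_pow_mul_add _ hc]
  split <;> simp

theorem popcount_split_blocks (x k M : ℕ) (hx : x < 2 ^ (M * 2 ^ (k + 1)))
    (m : ℕ)
    (hm : m = ∑ j ∈ Finset.range M, (2 ^ (2 ^ k) - 1) * 2 ^ (j * 2 ^ (k + 1))) :
    (x.bits.count true)
      = ((x &&& m).bits.count true)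
        + (((x / 2 ^ (2 ^ k)) &&& m).bits.count true) := by
  induction M generalizing x m with
  | zero =>
    simp at hx hm
    subst hx hm
    simp
  | succ M ih =>
    subst hm
    set Q : ℕ := 2 ^ (2 ^ k) with hQ
    set P : ℕ := 2 ^ (2 ^ (k + 1)) with hP
    have hQpos : 0 < Q := Nat.pow_pos (by norm_num)
    have hPQ : P = Q * Q := by rw [hP, hQ, ← pow_add, pow_succ]; ring_nf
    set m' : ℕ := ∑ j ∈ Finset.range M, (2 ^ (2 ^ k) - 1) * 2 ^ (j * 2 ^ (k + 1)) with hm'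
    have hmsplit : ∑ j ∈ Finset.range (M + 1), (2 ^ (2 ^ k) - 1) * 2 ^ (j * 2 ^ (k + 1))
        = P * m' + (Q - 1) := by
      rw [Finset.sum_range_succ']
      simp only [Nat.zero_mul, pow_zero, mul_one]
      rw [hm', Finset.mul_sum]
      congr 1
      apply Finset.sum_congr rfl
      intro j _
      rw [hP, show (j + 1) * 2 ^ (k + 1) = 2 ^ (k + 1) + j * 2 ^ (k + 1) by ring, pow_add]
      ring
    rw [hmsplit]
    set a : ℕ := x % P with hha
    set b : ℕ := x / P with hhb
    have haP : a < P := Nat.mod_lt _ (by positivity)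
    have hbM : b < 2 ^ (M * 2 ^ (k + 1)) := by
      rw [hhb, Nat.div_lt_iff_lt_mul (by positivity), hP, ← pow_add]
      calc x < 2 ^ ((M + 1) * 2 ^ (k + 1)) := hx
        _ = 2 ^ (M * 2 ^ (k + 1) + 2 ^ (k + 1)) := by ring_nf
    have hQleP : Q ≤ P := by rw [hPQ]; nlinarith
    have hQ1 : Q - 1 < P := by omega
    have hxab : x = P * b + a := (Nat.div_add_mod x P).symm
    have haQ : a / Q < Q := by rw [Nat.div_lt_iff_lt_mul hQpos, ← hPQ]; exact haP
    have hmodQ : a % Q < Q := Nat.mod_lt _ hQpos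
    -- popcount of x
    have e1 : (x.bits.count true) = (a % Q).bits.count true + (a / Q).bits.count true
        + b.bits.count true := by
      conv_lhs => rw [hxab, hP]
      rw [pc_add _ (hP ▸ haP)]
      have hd : a = Q * (a / Q) + a % Q := (Nat.div_add_mod a Q).symm
      conv_lhs => rw [hd, hQ]
      rw [pc_add _ (hQ ▸ hmodQ)]
    -- x &&& m
    have e2 : x &&& (P * m' + (Q - 1)) = P * (b &&& m') + (a % Q) := by
      conv_lhs => rw [hxab, hP]
      rw [land_split _ _ (hP ▸ haP) (hP ▸ hQ1), hQ, Nat.and_two_pow_sub_one_eq_mod, ← hP]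
    -- x / Q
    set c : ℕ := Q * (b % Q) + a / Q with hhc
    have hcP : c < P := by
      rw [hhc, hPQ]
      have h1 : b % Q < Q := Nat.mod_lt _ hQpos
      nlinarith
    have e3 : x / Q = P * (b / Q) + c := by
      conv_lhs => rw [hxab, hPQ, mul_assoc]
      rw [Nat.mul_add_div hQpos, hhc]
      have hb : b = Q * (b / Q) + b % Q := (Nat.div_add_mod b Q).symm
      conv_lhs => rw [hb]
      rw [hPQ]; ring
    have e4 : (x / Q) &&& (P * m' + (Q - 1)) = P * ((b / Q) &&& m') + (a / Q) := by
      rw [e3, hP]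
      rw [land_split _ _ (hP ▸ hcP) (hP ▸ hQ1), hQ, Nat.and_two_pow_sub_one_eq_mod, ← hP, ← hQ,
        hhc, Nat.mul_add_mod, Nat.mod_eq_of_lt haQ]
    -- assemble
    have hbm : b &&& m' < 2 ^ (M * 2 ^ (k + 1)) := lt_of_le_of_lt Nat.and_le_left hbM
    rw [e2, e4, hP]
    rw [pc_add _ (hP ▸ (lt_of_lt_of_le hmodQ hQleP)), pc_add _ (hP ▸ (lt_of_lt_of_le haQ hQleP)),
      e1, ih b hbM m' hm']
    ring
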